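/- Let Y ∈ ℝ^{c×c}, Z ∈ ℝ^{c₋×c}, and γ ∈ ℝ^c with all entries nonzero, and let L₋ ∈ ℝ^{c₋×c₋} be invertible. Let (U, V) be the Cayley transform of (Y, Z), set Γ = diag(γ), W = √2 · Γ⁻¹ Vᵀ L₋, L = √2 · U Γ, Λ = Γ², X = Lᵀ L, and X₋ = L₋ᵀ L₋. Then the block matrix [[X₋, −Wᵀ Λ], [−Λ W, 2Λ − X]] is positive semidefinite. -/

import Mathlib

open Matrix

/-- The direct parameterization `W = √2 Γ⁻¹ Vᵀ L₋` of a
fully-connected layer (with `(U,V)` the Cayley transform of `(Y,Z)`,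
`Γ = diag(γ)`, `L = √2 U Γ`, `Λ = Γ²`, `X = Lᵀ L`, `X₋ = L₋ᵀ L₋`)
renders the layer LMI `[[X₋, −Wᵀ Λ], [−Λ W, 2Λ − X]]` positive semidefinite. -/
theorem fc_layer_parameterization_satisfies_LMI
    (c cm : ℕ) (Y : Matrix (Fin c) (Fin c) ℝ) (Z : Matrix (Fin cm) (Fin c) ℝ)
    (γ : Fin c → ℝ) (hγ : ∀ i, γ i ≠ 0)
    (Lm : Matrix (Fin cm) (Fin cm) ℝ) (hLm : IsUnit Lm)
    (M : Matrix (Fin c) (Fin c) ℝ) (hM : M = Y - Yᵀ + Zᵀ * Z)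
    (U : Matrix (Fin c) (Fin c) ℝ) (hU : U = (1 + M)⁻¹ * (1 - M))
    (V : Matrix (Fin cm) (Fin c) ℝ) (hV : V = (2 : ℝ) • (Z * (1 + M)⁻¹))
    (Γ : Matrix (Fin c) (Fin c) ℝ) (hΓ : Γ = Matrix.diagonal γ)
    (W : Matrix (Fin c) (Fin cm) ℝ) (hW : W = Real.sqrt 2 • (Γ⁻¹ * Vᵀ * Lm))
    (L : Matrix (Fin c) (Fin c) ℝ) (hL : L = Real.sqrt 2 • (U * Γ))
    (Λ : Matrix (Fin c) (Fin c) ℝ) (hΛ : Λ = Γ * Γ)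
    (X : Matrix (Fin c) (Fin c) ℝ) (hX : X = Lᵀ * L)
    (Xm : Matrix (Fin cm) (Fin cm) ℝ) (hXm : Xm = Lmᵀ * Lm) :
    (Matrix.fromBlocks Xm (-(Wᵀ * Λ)) (-(Λ * W)) ((2 : ℝ) • Λ - X)).PosSemidef := by
  -- Γ facts
  have hΓdet : Γ.det ≠ 0 := by
    rw [hΓ, det_diagonal]
    exact Finset.prod_ne_zero_iff.mpr fun i _ => hγ i
  have hΓT : Γᵀ = Γ := by rw [hΓ, diagonal_transpose]
  have hΓinvΓ : Γ⁻¹ * Γ = 1 := nonsing_inv_mul Γ (Ne.isUnit hΓdet)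
  have hΓΓinv : Γ * Γ⁻¹ = 1 := mul_nonsing_inv Γ (Ne.isUnit hΓdet)
  have hΓinvT : (Γ⁻¹)ᵀ = Γ⁻¹ := by rw [transpose_nonsing_inv, hΓT]
  -- nonnegativity of dot products
  have dp_nonneg : ∀ {k : ℕ} (v : Fin k → ℝ), 0 ≤ v ⬝ᵥ v := by
    intro k v
    exact Finset.sum_nonneg fun i _ => mul_self_nonneg _
  -- 1 + M invertible
  have hdet : (1 + M).det ≠ 0 := by
    intro h
    obtain ⟨v, hv0, hv⟩ := (Matrix.exists_mulVec_eq_zero_iff).mpr h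
    have h1 : v ⬝ᵥ (1 + M) *ᵥ v = 0 := by rw [hv, dotProduct_zero]
    have hskew : v ⬝ᵥ (Y - Yᵀ) *ᵥ v = 0 := by
      have hyt : v ⬝ᵥ Yᵀ *ᵥ v = v ⬝ᵥ Y *ᵥ v := by
        rw [dotProduct_mulVec, vecMul_transpose, dotProduct_comm]
      rw [sub_mulVec, dotProduct_sub, hyt, sub_self]
    have hz : v ⬝ᵥ (Zᵀ * Z) *ᵥ v = (Z *ᵥ v) ⬝ᵥ (Z *ᵥ v) := by
      rw [← mulVec_mulVec, dotProduct_mulVec, vecMul_transpose]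
    rw [add_mulVec, dotProduct_add, one_mulVec, hM, add_mulVec, dotProduct_add,
      hskew, hz, zero_add] at h1
    have h2 : v ⬝ᵥ v = 0 := by
      have := dp_nonneg (Z *ᵥ v)
      have := dp_nonneg v
      linarith
    exact hv0 (dotProduct_self_eq_zero.mp h2)
  set N := (1 + M)⁻¹ with hN
  have hNl : N * (1 + M) = 1 := nonsing_inv_mul _ (Ne.isUnit hdet)
  have hNr : (1 + M) * N = 1 := mul_nonsing_inv _ (Ne.isUnit hdet)
  have hcomm : N * (1 - M) = (1 - M) * N := by
    have h1 : (1 - M) * (1 + M) = (1 + M) * (1 - M) := by noncomm_ring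
    calc N * (1 - M) = N * (1 - M) * ((1 + M) * N) := by rw [hNr, mul_one]
      _ = N * ((1 - M) * (1 + M)) * N := by noncomm_ring
      _ = N * ((1 + M) * (1 - M)) * N := by rw [h1]
      _ = (N * (1 + M)) * ((1 - M) * N) := by noncomm_ring
      _ = (1 - M) * N := by rw [hNl, one_mul]
  have hU' : U = (1 - M) * N := by rw [hU, hcomm]
  -- transpose of M
  have hMt : Mᵀ = Zᵀ * Z + Zᵀ * Z - M := by
    rw [hM]
    simp only [transpose_add, transpose_sub, transpose_mul, transpose_transpose]
    abel
  set S := Zᵀ * Z with hS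
  have hsand : (1 - M)ᵀ * (1 - M) + (S + S + S + S) = (1 + M)ᵀ * (1 + M) := by
    rw [transpose_sub, transpose_add, transpose_one, hMt]
    noncomm_ring
  have hUtU : Uᵀ * U = Nᵀ * ((1 - M)ᵀ * (1 - M)) * N := by
    rw [hU', transpose_mul]
    noncomm_ring
  have hVtV : Vᵀ * V = Nᵀ * (S + S + S + S) * N := by
    rw [hV, transpose_smul, transpose_mul, Matrix.smul_mul, Matrix.mul_smul, smul_smul]
    rw [show (2 : ℝ) * 2 = 1 + 1 + 1 + 1 by norm_num]
    simp only [add_smul, one_smul, hS, Matrix.add_mul, Matrix.mul_add, Matrix.mul_assoc]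
  have hUV : Uᵀ * U + Vᵀ * V = 1 := by
    rw [hUtU, hVtV, ← add_mul, ← mul_add, hsand]
    calc Nᵀ * ((1 + M)ᵀ * (1 + M)) * N = ((1 + M) * N)ᵀ * ((1 + M) * N) := by
          rw [transpose_mul]; noncomm_ring
      _ = 1 := by rw [hNr, transpose_one, one_mul]
  have hVV : Vᵀ * V = 1 - Uᵀ * U := by rw [← hUV]; abel
  -- the factorization
  have hsq : Real.sqrt 2 * Real.sqrt 2 = 2 := Real.mul_self_sqrt (by norm_num)
  set B := fromCols Lm (-(Real.sqrt 2 • (V * Γ))) with hB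
  have hc : Γ⁻¹ * (Γ * Γ) = Γ := by rw [← Matrix.mul_assoc, hΓinvΓ, one_mul]
  have hc2 : Γ * (Γ⁻¹ * (Vᵀ * Lm)) = Vᵀ * Lm := by
    rw [← Matrix.mul_assoc, hΓΓinv, Matrix.one_mul]
  have e2 : Lmᵀ * (-(Real.sqrt 2 • (V * Γ))) = -(Wᵀ * Λ) := by
    rw [hW, hΛ]
    simp only [transpose_smul, transpose_mul, transpose_transpose, hΓinvT]
    simp only [Matrix.mul_neg, Matrix.neg_mul, Matrix.smul_mul, Matrix.mul_smul,
      Matrix.mul_assoc, hc]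
  have e3 : (-(Real.sqrt 2 • (V * Γ)))ᵀ * Lm = -(Λ * W) := by
    rw [hW, hΛ]
    simp only [transpose_neg, transpose_smul, transpose_mul, hΓT]
    simp only [Matrix.neg_mul, Matrix.mul_neg, Matrix.smul_mul, Matrix.mul_smul,
      Matrix.mul_assoc, hc2]
  have e4 : (-(Real.sqrt 2 • (V * Γ)))ᵀ * (-(Real.sqrt 2 • (V * Γ)))
      = (2 : ℝ) • Λ - X := by
    rw [transpose_neg, Matrix.neg_mul, Matrix.mul_neg, neg_neg, transpose_smul,
      transpose_mul, hΓT, Matrix.smul_mul, Matrix.mul_smul, smul_smul, hsq]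
    have hVG : Γ * Vᵀ * (V * Γ) = Γ * Γ - Γ * Uᵀ * (U * Γ) := by
      calc Γ * Vᵀ * (V * Γ) = Γ * (Vᵀ * V) * Γ := by
            rw [Matrix.mul_assoc, Matrix.mul_assoc, Matrix.mul_assoc]
        _ = Γ * (1 - Uᵀ * U) * Γ := by rw [hVV]
        _ = Γ * Γ - Γ * (Uᵀ * U) * Γ := by
            rw [Matrix.mul_sub, Matrix.mul_one, Matrix.sub_mul]
        _ = Γ * Γ - Γ * Uᵀ * (U * Γ) := by
            rw [Matrix.mul_assoc, Matrix.mul_assoc, Matrix.mul_assoc]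
    rw [hVG, smul_sub, hΛ, hX, hL, transpose_smul, transpose_mul, hΓT,
      Matrix.smul_mul, Matrix.mul_smul, smul_smul, hsq]
  have hBB : Bᵀ * B =
      Matrix.fromBlocks Xm (-(Wᵀ * Λ)) (-(Λ * W)) ((2 : ℝ) • Λ - X) := by
    rw [hB, transpose_fromCols, fromRows_mul_fromCols, ← hXm, e2, e3, e4]
  rw [← hBB]
  have := Matrix.posSemidef_conjTranspose_mul_self B
  rwa [conjTranspose_eq_transpose_of_trivial] at this
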